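/- Let α > 1, c > 1, and let δ* ∈ (0, 1/α) be the unique value satisfying D(1/α ‖ δ*) = (ln c)/α. Define κ* = c·δ*/(1 + δ*·(c-1)). Then δ* < κ* < 1/α, the derivative condition ln c = ln((κ*/(1-κ*))·((1-δ*)/δ*)) holds, and κ*·ln c - D(κ* ‖ δ*) = ln(1 + (c-1)·δ*). -/

import Mathlib

noncomputable def klBer (a b : ℝ) : ℝ :=
  a * Real.log (a / b) + (1 - a) * Real.log ((1 - a) / (1 - b))

theorem stmt19 (α c δs : ℝ) (hα : 1 < α) (hc : 1 < c)
    (hδ0 : 0 < δs) (hδ1 : δs < 1 / α)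
    (hδ : klBer (1 / α) δs = Real.log c / α) :
    ∀ κs : ℝ, κs = c * δs / (1 + δs * (c - 1)) →
      δs < κs ∧ κs < 1 / α ∧
      Real.log c = Real.log ((κs / (1 - κs)) * ((1 - δs) / δs)) ∧
      κs * Real.log c - klBer κs δs = Real.log (1 + (c - 1) * δs) := by
  intro κs hκ
  have hα0 : 0 < α := lt_trans one_pos hα
  have hp0 : 0 < 1/α := by positivity
  have hp1 : 1/α < 1 := by rw [div_lt_one hα0]; exact hα
  have hd1 : δs < 1 := lt_trans hδ1 hp1
  have h1d : 0 < 1 - δs := by linarith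
  have h1p : 0 < 1 - 1/α := by linarith
  have hc0 : 0 < c := lt_trans one_pos hc
  have hS : 0 < 1 + δs * (c - 1) := by nlinarith
  have hd0' : δs ≠ 0 := ne_of_gt hδ0
  -- 1 - κs
  have hκ1 : 1 - κs = (1 - δs) / (1 + δs * (c - 1)) := by
    rw [hκ]; field_simp; ring
  have hκ1pos : 0 < 1 - κs := by rw [hκ1]; positivity
  -- part 1
  have part1 : δs < κs := by
    rw [hκ, lt_div_iff₀ hS]
    nlinarith [mul_pos (mul_pos hδ0 (by linarith : (0:ℝ) < c - 1)) h1d]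
  -- part 2
  have hδ' : (1/α) * (Real.log (1/α) - Real.log δs)
      + (1 - 1/α) * (Real.log (1 - 1/α) - Real.log (1 - δs)) = Real.log c * (1/α) := by
    have h := hδ
    unfold klBer at h
    rw [Real.log_div (ne_of_gt hp0) hd0', Real.log_div (ne_of_gt h1p) (ne_of_gt h1d)] at h
    rw [h]; ring
  set A := Real.log (1/α) - Real.log δs with hA
  set B := Real.log (1 - δs) - Real.log (1 - 1/α) with hB
  have hBpos : 0 < B := by
    rw [hB]
    exact sub_pos.mpr (Real.log_lt_log h1p (by linarith))
  have key : (1/α) * (A + B - Real.log c) = B := by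
    rw [hA, hB]; linear_combination hδ'
  have hltc : Real.log c < A + B := by
    by_contra h
    push_neg at h
    have h2 : (1/α) * (A + B - Real.log c) ≤ 0 :=
      mul_nonpos_of_nonneg_of_nonpos hp0.le (by linarith)
    rw [key] at h2
    linarith
  have hX : A + B = Real.log ((1/α) * (1 - δs) / (δs * (1 - 1/α))) := by
    rw [hA, hB,
      Real.log_div (mul_ne_zero (ne_of_gt hp0) (ne_of_gt h1d)) (mul_ne_zero hd0' (ne_of_gt h1p)),
      Real.log_mul (ne_of_gt hp0) (ne_of_gt h1d), Real.log_mul hd0' (ne_of_gt h1p)]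
    ring
  have hcX : c < (1/α) * (1 - δs) / (δs * (1 - 1/α)) := by
    rw [hX] at hltc
    exact (Real.log_lt_log_iff hc0 (by positivity)).mp hltc
  have hcX' : c * (δs * (1 - 1/α)) < (1/α) * (1 - δs) :=
    (lt_div_iff₀ (by positivity)).mp hcX
  have hcX2 : c * δs * (α - 1) < 1 - δs := by
    have h := hcX'
    field_simp at h
    have h2 := h
    nlinarith [h2]
  have part2 : κs < 1/α := by
    rw [hκ, div_lt_div_iff₀ hS hα0]
    nlinarith [hcX2]
  -- part 3
  have harg : (κs / (1 - κs)) * ((1 - δs) / δs) = c := by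
    rw [hκ1, hκ]; field_simp; all_goals ring
  have part3 : Real.log c = Real.log ((κs / (1 - κs)) * ((1 - δs) / δs)) := by
    rw [harg]
  -- part 4
  have e1 : κs / δs = c / (1 + δs * (c - 1)) := by
    rw [hκ]; field_simp
  have e2 : (1 - κs) / (1 - δs) = 1 / (1 + δs * (c - 1)) := by
    rw [hκ1]; field_simp; all_goals ring
  have part4 : κs * Real.log c - klBer κs δs = Real.log (1 + (c - 1) * δs) := by
    unfold klBer
    rw [e1, e2, Real.log_div (ne_of_gt hc0) (ne_of_gt hS),
      Real.log_div one_ne_zero (ne_of_gt hS), Real.log_one]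
    have : (c - 1) * δs = δs * (c - 1) := by ring
    rw [this]
    ring
  exact ⟨part1, part2, part3, part4⟩
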